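/- If a hereditary family F of graphs has the mighty Erdős–Hajnal property and is closed under cloning vertices, then F has the unbalanced mighty Erdős–Hajnal property. -/

import Mathlib

/-- A family of finite simple graphs, given as a predicate on graphs over every finite
vertex type. -/
abbrev GraphFamily : Type 1 := ∀ (V : Type) [Fintype V], SimpleGraph V → Prop

/-- A family of graphs is hereditary if it is closed under taking induced subgraphs. -/
def Hereditary (F : GraphFamily) : Prop :=
  ∀ (V : Type) [Fintype V] (G : SimpleGraph V), F V G →
    ∀ (s : Set V) [Fintype ↥s], F ↥s (G.induce s)

/-- The bipartite graph between `A` and `B` is complete or empty. -/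
def HomogPair {V : Type} (G : SimpleGraph V) (A B : Finset V) : Prop :=
  (∀ a ∈ A, ∀ b ∈ B, G.Adj a b) ∨ (∀ a ∈ A, ∀ b ∈ B, ¬ G.Adj a b)

/-- The number of (ordered) adjacent pairs between `A` and `B`. -/
noncomputable def crossCount {V : Type} (G : SimpleGraph V) (A B : Finset V) : ℕ :=
  {p : V × V | p.1 ∈ A ∧ p.2 ∈ B ∧ G.Adj p.1 p.2}.ncard

/-- The mighty Erdős–Hajnal property: there is `c > 0` such that for every graph in the family
and all disjoint vertex subsets `A, B` of equal size, there are `A' ⊆ A`, `B' ⊆ B` with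
`|A'| ≥ c|A|`, `|B'| ≥ c|B|` that are complete or empty to each other. -/
def MightyEH (F : GraphFamily) : Prop :=
  ∃ c : ℝ, 0 < c ∧
    ∀ (V : Type) [Fintype V] (G : SimpleGraph V), F V G →
      ∀ A B : Finset V, Disjoint A B → A.card = B.card →
        ∃ A' ⊆ A, ∃ B' ⊆ B,
          c * A.card ≤ (A'.card : ℝ) ∧ c * B.card ≤ (B'.card : ℝ) ∧ HomogPair G A' B'

/-- The homogeneous regularity property: for every `ε > 0` there is `K` such that every graph
in the family has an equipartition into `K` parts such that all but at most `ε K²` pairs of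
distinct parts are complete or empty to each other. -/
def HomogReg (F : GraphFamily) : Prop :=
  ∀ ε : ℝ, 0 < ε → ∃ K : ℕ, 0 < K ∧
    ∀ (V : Type) [Fintype V] (G : SimpleGraph V), F V G →
      ∃ P : Fin K → Finset V,
        (∀ i j, i ≠ j → Disjoint (P i) (P j)) ∧
        (∀ v : V, ∃ i, v ∈ P i) ∧
        (∀ i j, (P i).card ≤ (P j).card + 1) ∧
        ({p : Fin K × Fin K | p.1 ≠ p.2 ∧ ¬ HomogPair G (P p.1) (P p.2)}.ncard : ℝ)
          ≤ ε * K ^ 2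

/-- The homogeneous density property: for every `ε > 0` there is `C = C(ε)` such that for every
graph in the family and disjoint equal-size subsets `A, B` with at least `ε|A||B|` edges between
them, there are `A' ⊆ A`, `B' ⊆ B` of sizes at least `ε^C |A|`, `ε^C |B|` that are complete to
each other. -/
def HomogDensity (F : GraphFamily) : Prop :=
  ∀ ε : ℝ, 0 < ε → ε ≤ 1 → ∃ C : ℝ, 0 < C ∧
    ∀ (V : Type) [Fintype V] (G : SimpleGraph V), F V G →
      ∀ A B : Finset V, Disjoint A B → A.card = B.card →
        ε * A.card * B.card ≤ (crossCount G A B : ℝ) →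
        ∃ A' ⊆ A, ∃ B' ⊆ B,
          ε ^ C * A.card ≤ (A'.card : ℝ) ∧ ε ^ C * B.card ≤ (B'.card : ℝ) ∧
          ∀ a ∈ A', ∀ b ∈ B', G.Adj a b

/-- The family of complements of graphs in `F`. -/
def ComplFamily (F : GraphFamily) : GraphFamily :=
  fun V inst G => @F V inst Gᶜ

/-- The graph obtained from `G` by cloning the vertex `v`: the new vertex (`Sum.inr ()`) is
adjacent to exactly the neighbors of `v` (and not to `v` itself). -/
def cloneGraph {V : Type} (G : SimpleGraph V) (v : V) : SimpleGraph (V ⊕ Unit) where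
  Adj x y := match x, y with
    | .inl a, .inl b => G.Adj a b
    | .inl a, .inr _ => G.Adj a v
    | .inr _, .inl b => G.Adj v b
    | .inr _, .inr _ => False
  symm := by
    refine ⟨?_⟩
    rintro (a | a) (b | b) h
    · exact G.adj_symm h
    · exact G.adj_symm h
    · exact G.adj_symm h
    · exact h.elim
  loopless := by
    refine ⟨?_⟩
    rintro (a | a) h
    · exact G.irrefl h
    · exact h

/-- `F` is closed under cloning vertices. -/
def ClosedUnderCloning (F : GraphFamily) : Prop :=
  ∀ (V : Type) [Fintype V] (G : SimpleGraph V), F V G →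
    ∀ v : V, F (V ⊕ Unit) (cloneGraph G v)

/-- The unbalanced mighty Erdős–Hajnal property: as the mighty Erdős–Hajnal property, but for
all disjoint subsets `A, B` without the restriction `|A| = |B|`. -/
def UnbalancedMightyEH (F : GraphFamily) : Prop :=
  ∃ c : ℝ, 0 < c ∧
    ∀ (V : Type) [Fintype V] (G : SimpleGraph V), F V G →
      ∀ A B : Finset V, Disjoint A B →
        ∃ A' ⊆ A, ∃ B' ⊆ B,
          c * A.card ≤ (A'.card : ℝ) ∧ c * B.card ≤ (B'.card : ℝ) ∧ HomogPair G A' B'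

namespace Stmt13Aux

variable {V : Type}

def CT (V : Type) : List V → Type
  | [] => V
  | _ :: l => CT V l ⊕ Unit

instance CTFintype [Fintype V] : ∀ l : List V, Fintype (CT V l)
  | [] => inferInstanceAs (Fintype V)
  | _ :: l => letI := CTFintype l; inferInstanceAs (Fintype (CT V l ⊕ Unit))

def cProj : ∀ l : List V, CT V l → V
  | [] => id
  | x :: l => Sum.elim (cProj l) fun _ => x

def cEmb : ∀ l : List V, V → CT V l
  | [] => id
  | _ :: l => fun v => Sum.inl (cEmb l v)

def cGraph (G : SimpleGraph V) : ∀ l : List V, SimpleGraph (CT V l)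
  | [] => G
  | x :: l => cloneGraph (cGraph G l) (cEmb l x)

lemma cProj_cEmb : ∀ (l : List V) (v : V), cProj l (cEmb l v) = v
  | [], v => rfl
  | _ :: l, v => cProj_cEmb l v

lemma cGraph_adj (G : SimpleGraph V) :
    ∀ (l : List V) (x y : CT V l), (cGraph G l).Adj x y ↔ G.Adj (cProj l x) (cProj l y)
  | [], x, y => Iff.rfl
  | a :: l, x, y => by
    rcases x with x | x <;> rcases y with y | y
    · exact cGraph_adj G l x y
    · show (cGraph G l).Adj x (cEmb l a) ↔ _
      rw [cGraph_adj G l, cProj_cEmb]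
      rfl
    · show (cGraph G l).Adj (cEmb l a) y ↔ _
      rw [cGraph_adj G l, cProj_cEmb]
      rfl
    · show False ↔ G.Adj (cProj (a :: l) (Sum.inr x)) (cProj (a :: l) (Sum.inr y))
      simp [cProj]

lemma cGraph_mem (F : GraphFamily) (hclone : ClosedUnderCloning F) [Fintype V]
    (G : SimpleGraph V) (hG : F V G) : ∀ l : List V, F (CT V l) (cGraph G l)
  | [] => hG
  | x :: l => hclone (CT V l) (cGraph G l) (cGraph_mem F hclone G hG l) (cEmb l x)

lemma card_preimage [Fintype V] [DecidableEq V] (A : Finset V) :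
    ∀ l : List V, (Finset.univ.filter fun t => cProj l t ∈ A).card
      = A.card + l.countP (fun v => decide (v ∈ A))
  | [] => by
    show (Finset.univ.filter fun t : V => t ∈ A).card = A.card + 0
    simp [Finset.filter_mem_eq_inter]
  | x :: l => by
    rw [Finset.card_filter]
    show (∑ t : CT V l ⊕ Unit, if cProj (x :: l) t ∈ A then 1 else 0) = _
    rw [Fintype.sum_sum_type]
    simp only [cProj, Sum.elim_inl, Sum.elim_inr]
    show (∑ t : CT V l, if cProj l t ∈ A then 1 else 0) + (∑ _t : Unit, if x ∈ A then 1 else 0) = _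
    rw [← Finset.card_filter, card_preimage A l, List.countP_cons]
    simp only [Finset.sum_const, Finset.card_univ, Fintype.card_unit, one_smul, smul_eq_mul,
      one_mul, decide_eq_true_eq]
    by_cases hx : x ∈ A <;> simp [hx, add_assoc]

lemma card_fiber [Fintype V] [DecidableEq V] (u : V) :
    ∀ l : List V, (Finset.univ.filter fun t => cProj l t = u).card = 1 + l.count u
  | [] => by
    show (Finset.univ.filter fun t : V => t = u).card = 1 + 0
    simp [Finset.filter_eq']
  | x :: l => by
    rw [Finset.card_filter]
    show (∑ t : CT V l ⊕ Unit, if cProj (x :: l) t = u then 1 else 0) = _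
    rw [Fintype.sum_sum_type]
    simp only [cProj, Sum.elim_inl, Sum.elim_inr]
    show (∑ t : CT V l, if cProj l t = u then 1 else 0) + (∑ _t : Unit, if x = u then 1 else 0) = _
    rw [← Finset.card_filter, card_fiber u l, List.count_cons]
    simp only [Finset.sum_const, Finset.card_univ, Fintype.card_unit, one_smul, smul_eq_mul,
      one_mul, beq_iff_eq]
    by_cases hx : x = u <;> simp [hx, add_assoc]

lemma countP_replicate' (p : V → Bool) (x : V) :
    ∀ k, (List.replicate k x).countP p = if p x then k else 0
  | 0 => by simp
  | k + 1 => by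
    rw [List.replicate_succ, List.countP_cons, countP_replicate' p x k]
    split <;> simp [*]

lemma countP_flatMap_replicate (p : V → Bool) (k : ℕ) :
    ∀ L : List V, (L.flatMap fun v => List.replicate k v).countP p = k * L.countP p
  | [] => by simp
  | x :: L => by
    rw [List.flatMap_cons, List.countP_append, countP_flatMap_replicate p k L,
      List.countP_cons, countP_replicate' p x k]
    split <;> ring

lemma count_flatMap_replicate [DecidableEq V] (u : V) (k : ℕ) :
    ∀ L : List V, (L.flatMap fun v => List.replicate k v).count u = k * L.count u
  | [] => by simp
  | x :: L => by
    rw [List.flatMap_cons, List.count_append, count_flatMap_replicate u k L,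
      List.count_cons, List.count_replicate]
    split <;> ring

lemma homogPair_symm {G : SimpleGraph V} {A B : Finset V} (h : HomogPair G A B) :
    HomogPair G B A := by
  rcases h with h | h
  · exact Or.inl fun b hb a ha => (h a ha b hb).symm
  · exact Or.inr fun b hb a ha hadj => h a ha b hb hadj.symm

lemma main_half (F : GraphFamily) (hclone : ClosedUnderCloning F) (c : ℝ) (hc : 0 < c)
    (hmighty : ∀ (W : Type) [Fintype W] (H : SimpleGraph W), F W H →
      ∀ A B : Finset W, Disjoint A B → A.card = B.card →
        ∃ A' ⊆ A, ∃ B' ⊆ B,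
          c * A.card ≤ (A'.card : ℝ) ∧ c * B.card ≤ (B'.card : ℝ) ∧ HomogPair H A' B')
    (V : Type) [Fintype V] (G : SimpleGraph V) (hG : F V G)
    (A B : Finset V) (hAB : Disjoint A B) (hab : A.card ≤ B.card) (ha : 0 < A.card) :
    ∃ A' ⊆ A, ∃ B' ⊆ B,
      c / 2 * A.card ≤ (A'.card : ℝ) ∧ c / 2 * B.card ≤ (B'.card : ℝ) ∧ HomogPair G A' B' := by
  letI := Classical.decEq V
  set a := A.card with ha_def
  set b := B.card with hb_def
  set d := b / a with hd_def
  have h1 : a * d + b % a = b := Nat.div_add_mod b a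
  have h2 : b % a < a := Nat.mod_lt _ ha
  have hL : a * (d + 1) = a * d + a := by ring
  have hbL : b < a * (d + 1) := by omega
  have hLba : a * (d + 1) - b ≤ a := by omega
  obtain ⟨S, hSB, hScard⟩ := Finset.exists_subset_card_eq
    (show a * (d + 1) - b ≤ B.card from le_trans hLba hab)
  set l := (A.toList.flatMap fun v => List.replicate d v) ++ S.toList with hl_def
  have hnotB : ∀ u ∈ A, u ∉ B := fun u hu => Finset.disjoint_left.1 hAB hu
  have hcPA : l.countP (fun v => decide (v ∈ A)) = d * a := by
    rw [hl_def, List.countP_append, countP_flatMap_replicate]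
    have e1 : A.toList.countP (fun v => decide (v ∈ A)) = a := by
      rw [List.countP_eq_length.2 (fun v hv => by simpa using Finset.mem_toList.1 hv),
        Finset.length_toList]
    have e2 : S.toList.countP (fun v => decide (v ∈ A)) = 0 :=
      List.countP_eq_zero.2 (fun v hv => by
        simp only [decide_eq_true_eq]
        exact fun hvA => hnotB v hvA (hSB (Finset.mem_toList.1 hv)))
    rw [e1, e2, add_zero]
  have hcPB : l.countP (fun v => decide (v ∈ B)) = a * (d + 1) - b := by
    rw [hl_def, List.countP_append, countP_flatMap_replicate]
    have e1 : A.toList.countP (fun v => decide (v ∈ B)) = 0 :=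
      List.countP_eq_zero.2 (fun v hv => by
        simp only [decide_eq_true_eq]
        exact hnotB v (Finset.mem_toList.1 hv))
    have e2 : S.toList.countP (fun v => decide (v ∈ B)) = S.toList.length :=
      List.countP_eq_length.2 (fun v hv => by
        simpa using hSB (Finset.mem_toList.1 hv))
    rw [e1, e2, Finset.length_toList, hScard, Nat.mul_zero, Nat.zero_add]
  have hcntA : ∀ u ∈ A, l.count u = d := fun u hu => by
    rw [hl_def, List.count_append, count_flatMap_replicate,
      List.count_eq_one_of_mem (Finset.nodup_toList A) (Finset.mem_toList.2 hu),
      List.count_eq_zero.2 (fun hmem => hnotB u hu (hSB (Finset.mem_toList.1 hmem)))]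
    ring
  have hcntB : ∀ u ∈ B, l.count u ≤ 1 := fun u hu => by
    rw [hl_def, List.count_append, count_flatMap_replicate,
      List.count_eq_zero.2 (fun hmem => hnotB u (Finset.mem_toList.1 hmem) hu)]
    simpa using List.nodup_iff_count_le_one.1 (Finset.nodup_toList S) u
  set At := Finset.univ.filter (fun t => cProj l t ∈ A) with hAt_def
  set Bt := Finset.univ.filter (fun t => cProj l t ∈ B) with hBt_def
  have hAtcard : At.card = a * (d + 1) := by
    rw [hAt_def, card_preimage, hcPA]; ring
  have hBtcard : Bt.card = a * (d + 1) := by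
    rw [hBt_def, card_preimage, hcPB]; omega
  have hdisj : Disjoint At Bt := Finset.disjoint_left.2 (fun {t} ht1 ht2 =>
    hnotB _ (Finset.mem_filter.1 ht1).2 (Finset.mem_filter.1 ht2).2)
  obtain ⟨At', hAt', Bt', hBt', hcA, hcB, hhom⟩ :=
    hmighty (CT V l) (cGraph G l) (cGraph_mem F hclone G hG l) At Bt hdisj
      (by rw [hAtcard, hBtcard])
  have hAim : At'.image (cProj l) ⊆ A := by
    intro u hu
    obtain ⟨t, ht, rfl⟩ := Finset.mem_image.1 hu
    exact (Finset.mem_filter.1 (hAt' ht)).2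
  have hBim : Bt'.image (cProj l) ⊆ B := by
    intro u hu
    obtain ⟨t, ht, rfl⟩ := Finset.mem_image.1 hu
    exact (Finset.mem_filter.1 (hBt' ht)).2
  refine ⟨At'.image (cProj l), hAim, Bt'.image (cProj l), hBim, ?_, ?_, ?_⟩
  · -- A side count
    have hfib : ∀ u ∈ At'.image (cProj l),
        (At'.filter fun t => cProj l t = u).card ≤ d + 1 := by
      intro u hu
      calc (At'.filter fun t => cProj l t = u).card
          ≤ (Finset.univ.filter fun t => cProj l t = u).card :=
            Finset.card_le_card (Finset.filter_subset_filter _ (Finset.subset_univ _))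
        _ = 1 + l.count u := card_fiber u l
        _ ≤ d + 1 := by rw [hcntA u (hAim hu)]; omega
    have hcount := Finset.card_le_mul_card_image At' (d + 1) hfib
    have h1' : c * ((a : ℝ) * (d + 1)) ≤ ((d : ℝ) + 1) * (At'.image (cProj l)).card := by
      calc c * ((a : ℝ) * (d + 1)) = c * (At.card : ℝ) := by rw [hAtcard]; push_cast; ring
        _ ≤ At'.card := hcA
        _ ≤ ((d : ℝ) + 1) * (At'.image (cProj l)).card := by exact_mod_cast hcount
    have h2' : c * a ≤ ((At'.image (cProj l)).card : ℝ) := by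
      have hpos : (0 : ℝ) < (d : ℝ) + 1 := by positivity
      refine le_of_mul_le_mul_right ?_ hpos
      calc c * (a : ℝ) * ((d : ℝ) + 1) = c * ((a : ℝ) * (d + 1)) := by ring
        _ ≤ ((d : ℝ) + 1) * (At'.image (cProj l)).card := h1'
        _ = ((At'.image (cProj l)).card : ℝ) * ((d : ℝ) + 1) := by ring
    nlinarith [Nat.cast_nonneg (α := ℝ) a]
  · -- B side count
    have hfib : ∀ u ∈ Bt'.image (cProj l),
        (Bt'.filter fun t => cProj l t = u).card ≤ 2 := by
      intro u hu
      calc (Bt'.filter fun t => cProj l t = u).card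
          ≤ (Finset.univ.filter fun t => cProj l t = u).card :=
            Finset.card_le_card (Finset.filter_subset_filter _ (Finset.subset_univ _))
        _ = 1 + l.count u := card_fiber u l
        _ ≤ 2 := by have := hcntB u (hBim hu); omega
    have hcount := Finset.card_le_mul_card_image Bt' 2 hfib
    have h1' : c * (b : ℝ) ≤ 2 * (Bt'.image (cProj l)).card := by
      have hble : (b : ℝ) ≤ (Bt.card : ℝ) := by
        rw [hBtcard]; exact_mod_cast hbL.le
      calc c * (b : ℝ) ≤ c * (Bt.card : ℝ) := by nlinarith
        _ ≤ Bt'.card := hcB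
        _ ≤ 2 * (Bt'.image (cProj l)).card := by exact_mod_cast hcount
    linarith
  · -- homogeneity transfer
    rcases hhom with hh | hh
    · refine Or.inl fun u hu w hw => ?_
      obtain ⟨x, hx, rfl⟩ := Finset.mem_image.1 hu
      obtain ⟨y, hy, rfl⟩ := Finset.mem_image.1 hw
      exact (cGraph_adj G l x y).1 (hh x hx y hy)
    · refine Or.inr fun u hu w hw => ?_
      obtain ⟨x, hx, rfl⟩ := Finset.mem_image.1 hu
      obtain ⟨y, hy, rfl⟩ := Finset.mem_image.1 hw
      exact fun hadj => hh x hx y hy ((cGraph_adj G l x y).2 hadj)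

end Stmt13Aux

/-- If a hereditary family of graphs has the mighty Erdős–Hajnal property and is closed under
cloning vertices, then it has the unbalanced mighty Erdős–Hajnal property. -/
theorem stmt13 (F : GraphFamily) (hF : Hereditary F) (hclone : ClosedUnderCloning F)
    (h : MightyEH F) : UnbalancedMightyEH F := by
  obtain ⟨c, hc, hmighty⟩ := h
  refine ⟨min (c / 2) 1, lt_min (by positivity) one_pos, ?_⟩
  intro V _ G hG A B hAB
  rcases Nat.eq_zero_or_pos A.card with hA0 | hA0
  · refine ⟨∅, Finset.empty_subset _, B, subset_rfl, ?_, ?_, Or.inl (by simp)⟩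
    · simp [hA0]
    · nlinarith [min_le_right (c / 2) 1, (Nat.cast_nonneg B.card : (0 : ℝ) ≤ B.card),
        lt_min (show (0:ℝ) < c / 2 by positivity) (show (0:ℝ) < 1 by norm_num)]
  rcases Nat.eq_zero_or_pos B.card with hB0 | hB0
  · refine ⟨A, subset_rfl, ∅, Finset.empty_subset _, ?_, ?_, Or.inl (by simp)⟩
    · nlinarith [min_le_right (c / 2) 1, (Nat.cast_nonneg A.card : (0 : ℝ) ≤ A.card),
        lt_min (show (0:ℝ) < c / 2 by positivity) (show (0:ℝ) < 1 by norm_num)]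
    · simp [hB0]
  rcases le_or_gt A.card B.card with hle | hlt
  · obtain ⟨A', hA'A, B', hB'B, h1, h2, hh⟩ :=
      Stmt13Aux.main_half F hclone c hc hmighty V G hG A B hAB hle hA0
    exact ⟨A', hA'A, B', hB'B,
      le_trans (mul_le_mul_of_nonneg_right (min_le_left _ _) (Nat.cast_nonneg _)) h1,
      le_trans (mul_le_mul_of_nonneg_right (min_le_left _ _) (Nat.cast_nonneg _)) h2, hh⟩
  · obtain ⟨B', hB'B, A', hA'A, h1, h2, hh⟩ :=
      Stmt13Aux.main_half F hclone c hc hmighty V G hG B A hAB.symm hlt.le hB0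
    exact ⟨A', hA'A, B', hB'B,
      le_trans (mul_le_mul_of_nonneg_right (min_le_left _ _) (Nat.cast_nonneg _)) h2,
      le_trans (mul_le_mul_of_nonneg_right (min_le_left _ _) (Nat.cast_nonneg _)) h1,
      Stmt13Aux.homogPair_symm hh⟩
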